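/- Let a be a real number with 1/√3 < a < √3 and set c(a) = (9/8)(a + 1/a). Then the function F_a : ℝ² → ℝ, F_a(x,y) = x² + y² + (1/9)(a·x² + y²/a - c(a))², has (0,0) as its unique critical point (the gradient of F_a vanishes only at the origin), and F_a attains a strict global minimum there: F_a(x,y) > F_a(0,0) for all (x,y) ≠ (0,0). -/

import Mathlib

/-- `F_a`, the Casimir `K` restricted to the light-cone paraboloid `{H_a(M,1) = 0}` of the
reduced Fefferman Hamiltonian, in the coordinates `(M₁, M₂) = (x, y)`. -/
noncomputable def Fa (a : ℝ) (p : ℝ × ℝ) : ℝ :=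
  p.1 ^ 2 + p.2 ^ 2 + (1/9) * (a * p.1 ^ 2 + p.2 ^ 2 / a - (9/8) * (a + 1/a)) ^ 2

/-- The total derivative of `F_a` at `p`. -/
noncomputable def La (a : ℝ) (p : ℝ × ℝ) : ℝ × ℝ →L[ℝ] ℝ :=
  (2 * p.1 * (1 + (2*a/9) * (a * p.1 ^ 2 + p.2 ^ 2 / a - (9/8) * (a + 1/a)))) •
      ContinuousLinearMap.fst ℝ ℝ ℝ
  + (2 * p.2 * (1 + (2/(9*a)) * (a * p.1 ^ 2 + p.2 ^ 2 / a - (9/8) * (a + 1/a)))) •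
      ContinuousLinearMap.snd ℝ ℝ ℝ

lemma hasFDeriv_Fa (a : ℝ) (p : ℝ × ℝ) : HasFDerivAt (Fa a) (La a p) p := by
  have h1 : HasFDerivAt (fun q : ℝ × ℝ => q.1) (ContinuousLinearMap.fst ℝ ℝ ℝ) p :=
    hasFDerivAt_fst
  have h2 : HasFDerivAt (fun q : ℝ × ℝ => q.2) (ContinuousLinearMap.snd ℝ ℝ ℝ) p :=
    hasFDerivAt_snd
  have hg := (((h1.mul h1).const_mul a).add ((h2.mul h2).mul_const a⁻¹)).sub_const
      ((9/8) * (a + 1/a))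
  have hFa := ((h1.mul h1).add (h2.mul h2)).add ((hg.mul hg).const_mul (1/9 : ℝ))
  have hfun : Fa a = fun q : ℝ × ℝ =>
      q.1 * q.1 + q.2 * q.2 +
        (1/9) * ((a * (q.1 * q.1) + q.2 * q.2 * a⁻¹ - (9/8) * (a + 1/a)) *
          (a * (q.1 * q.1) + q.2 * q.2 * a⁻¹ - (9/8) * (a + 1/a))) := by
    funext q; simp only [Fa, div_eq_mul_inv]; ring
  rw [hfun]
  refine hFa.congr_fderiv ?_
  ext v <;>
  · simp [La, ContinuousLinearMap.comp_apply, ContinuousLinearMap.smul_apply,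
      ContinuousLinearMap.add_apply, div_eq_mul_inv]
    ring

lemma La_zero (a : ℝ) : La a (0, 0) = 0 := by
  unfold La
  norm_num

set_option maxHeartbeats 1000000 in
/-- For `1/√3 < a < √3`, the origin is the unique critical point of `F_a` and `F_a`
attains a strict global minimum there. -/
theorem Fa_origin_unique_critical_strict_min (a : ℝ)
    (ha₁ : 1 / Real.sqrt 3 < a) (ha₂ : a < Real.sqrt 3) :
    (∀ p : ℝ × ℝ, fderiv ℝ (Fa a) p = 0 ↔ p = (0, 0)) ∧
    (∀ p : ℝ × ℝ, p ≠ (0, 0) → Fa a p > Fa a (0, 0)) := by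
  have hs3 : (0:ℝ) < Real.sqrt 3 := Real.sqrt_pos.mpr (by norm_num)
  have hs3sq : Real.sqrt 3 * Real.sqrt 3 = 3 := Real.mul_self_sqrt (by norm_num)
  have ha0 : 0 < a := lt_trans (by positivity) ha₁
  have hane : a ≠ 0 := ne_of_gt ha0
  have hainv : a * a⁻¹ = 1 := mul_inv_cancel₀ hane
  have haub : a ^ 2 < 3 := by nlinarith
  have halb : 1 < 3 * a ^ 2 := by
    have h1 : 1 < a * Real.sqrt 3 := by
      rw [div_lt_iff₀ hs3] at ha₁; linarith
    nlinarith
  constructor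
  · intro p
    rw [(hasFDeriv_Fa a p).fderiv]
    constructor
    · intro h
      have hQ : 0 ≤ a * p.1 ^ 2 + p.2 ^ 2 / a := by positivity
      have hF1 : 0 < 1 + (2*a/9) * (a * p.1 ^ 2 + p.2 ^ 2 / a - (9/8) * (a + 1/a)) := by
        have : (2*a/9) * ((9/8) * (a + 1/a)) = (a^2 + 1) / 4 := by
          field_simp; ring
        nlinarith [mul_nonneg (by positivity : (0:ℝ) ≤ 2*a/9) hQ]
      have hF2 : 0 < 1 + (2/(9*a)) * (a * p.1 ^ 2 + p.2 ^ 2 / a - (9/8) * (a + 1/a)) := by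
        have h9a : (0:ℝ) < 9 * a := by linarith
        have : (2/(9*a)) * ((9/8) * (a + 1/a)) = (a^2 + 1) / (4 * a^2) := by
          field_simp; ring
        have hlt : (a^2 + 1) / (4 * a^2) < 1 := by
          rw [div_lt_one (by positivity)]; nlinarith
        nlinarith [mul_nonneg (le_of_lt (by positivity : (0:ℝ) < 2/(9*a))) hQ]
      have h1 := congrArg (fun L : ℝ × ℝ →L[ℝ] ℝ => L (1, 0)) h
      have h2 := congrArg (fun L : ℝ × ℝ →L[ℝ] ℝ => L (0, 1)) h
      simp [La, ContinuousLinearMap.smul_apply, ContinuousLinearMap.add_apply] at h1 h2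
      rw [show (a:ℝ)⁻¹ = 1/a from (one_div a).symm] at h1 h2
      have hp1 : p.1 = 0 := by
        rcases h1 with h1 | h1
        · exact h1
        · exact absurd h1 (by nlinarith)
      have hp2 : p.2 = 0 := by
        rcases h2 with h2 | h2
        · exact h2
        · exact absurd h2 (by nlinarith)
      exact Prod.ext hp1 hp2
    · intro h
      subst h
      exact La_zero a
  · intro p hp
    have hkey : Fa a p = Fa a (0, 0) + ((3 - a^2)/4) * p.1^2
        + ((3*a^2 - 1)/(4*a^2)) * p.2^2 + (1/9) * (a * p.1^2 + p.2^2 / a)^2 := by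
      simp only [Fa]
      field_simp
      ring
    have hne : p.1 ≠ 0 ∨ p.2 ≠ 0 := by
      by_contra hc
      push_neg at hc
      exact hp (Prod.ext hc.1 hc.2)
    have hQ2 : 0 ≤ (1/9) * (a * p.1^2 + p.2^2 / a)^2 := by positivity
    have ht1 : 0 ≤ ((3 - a^2)/4) * p.1^2 := by
      apply mul_nonneg (by linarith) (sq_nonneg _)
    have ht2 : 0 ≤ ((3*a^2 - 1)/(4*a^2)) * p.2^2 := by
      apply mul_nonneg (div_nonneg (by linarith) (by positivity)) (sq_nonneg _)
    rcases hne with h | h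
    · have : 0 < ((3 - a^2)/4) * p.1^2 := by
        apply mul_pos (by linarith) (by positivity)
      linarith [hkey ▸ le_refl (Fa a p)]
    · have : 0 < ((3*a^2 - 1)/(4*a^2)) * p.2^2 := by
        apply mul_pos (div_pos (by linarith) (by positivity)) (by positivity)
      linarith [hkey ▸ le_refl (Fa a p)]
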